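/- Let μ ∈ ℝ with μ ≠ 3/4 and (1−μ)·μ·(3μ−2)·(4μ−1) ≥ 0 (so the square root below is real). Then c = [μ(28μ − 25) + 6 − 4√6·√((1−μ)μ(3μ−2)(4μ−1))] / (3 − 4μ)² satisfies (4cμ + c − 11μ + 2)² + 8c(4μ−1)(−c + μ + 2) = 0; that is, this c is a root of the discriminant whose vanishing marks the saddle-node bifurcation at which the two interior fixed points of the ALLD → ALLC replicator-mutator system coalesce. -/

import Mathlib

/-- The saddle-node bifurcation curve of the ALLD → ALLC replicator-mutator
system: the given `c` is a root of the discriminant. -/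
theorem saddle_node_curve_ALLD_to_ALLC (μ : ℝ) (hμ : μ ≠ 3 / 4)
    (hD : 0 ≤ (1 - μ) * μ * (3 * μ - 2) * (4 * μ - 1))
    (c : ℝ)
    (hc : c = (μ * (28 * μ - 25) + 6
               - 4 * Real.sqrt 6 * Real.sqrt ((1 - μ) * μ * (3 * μ - 2) * (4 * μ - 1)))
              / (3 - 4 * μ) ^ 2) :
    (4 * c * μ + c - 11 * μ + 2) ^ 2 + 8 * c * (4 * μ - 1) * (-c + μ + 2) = 0 := by
  set s := Real.sqrt ((1 - μ) * μ * (3 * μ - 2) * (4 * μ - 1)) with hsdef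
  set t := Real.sqrt 6 with htdef
  have hs : s ^ 2 = (1 - μ) * μ * (3 * μ - 2) * (4 * μ - 1) := Real.sq_sqrt hD
  have ht : t ^ 2 = 6 := Real.sq_sqrt (by norm_num)
  have hden : (3 - 4 * μ) ≠ 0 := by
    intro h; apply hμ; linarith
  subst hc
  field_simp
  linear_combination ((11520 - 92928* μ + 310784* μ ^ 2 - 552960* μ ^ 3 + 552960* μ ^ 4 - 294912* μ ^ 5 + 65536* μ ^ 6) * t ^ 2) * hs +
    (23040* μ - 335616* μ ^ 2 + 2094592* μ ^ 3 - 7421696* μ ^ 4 + 16557568* μ ^ 5 - 24225792* μ ^ 6 + 23318528* μ ^ 7 - 14270464* μ ^ 8 + 5046272* μ ^ 9 - 786432* μ ^ 10) * ht +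
    ((144 - 384 * μ + 256 * μ ^ 2) * t ^ 2) * hs +
    (288 * μ - 2640 * μ ^ 2 + 8816 * μ ^ 3 - 13888 * μ ^ 4 + 10496 * μ ^ 5 - 3072 * μ ^ 6) * ht -
    ((11520 - 92928* μ + 310784* μ ^ 2 - 552960* μ ^ 3 + 552960* μ ^ 4 - 294912* μ ^ 5 + 65536* μ ^ 6) * t ^ 2) * hs -
    ((11520 - 92928* μ + 310784* μ ^ 2 - 552960* μ ^ 3 + 552960* μ ^ 4 - 294912* μ ^ 5 + 65536* μ ^ 6) * ((1 - μ) * μ * (3 * μ - 2) * (4 * μ - 1))) * ht
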